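/- Let ω > 0 and let λ₁, λ₂ be nonzero complex numbers with λ₁ + λ₂ ≠ 0, such that for each j ∈ {1,2} it is not the case that Re(λ_j) = 0 and |λ_j| ≤ ω. Then ∫_{−ω}^{ω} ( (iν − λ₁)·(−iν − λ₂) )⁻¹ dν = (2/(λ₁ + λ₂))·( atan(ω/λ₁) + atan(ω/λ₂) ), where the integral is the interval integral of a ℂ-valued function of the real variable ν. -/

import Mathlib

open Complex MeasureTheory intervalIntegral

/-- Principal complex arctangent: `atan z = (1/(2i))·(log(1+iz) − log(1−iz))`,
where `log` is the principal branch of the complex logarithm. -/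
noncomputable def catan (z : ℂ) : ℂ :=
  (2 * Complex.I)⁻¹ * (Complex.log (1 + Complex.I * z) - Complex.log (1 - Complex.I * z))

lemma aux_mem (ω : ℝ) (lam : ℂ) (hlam : lam ≠ 0)
    (hb : ¬ (lam.re = 0 ∧ ‖lam‖ ≤ ω)) (ν : ℝ) (hν : |ν| ≤ ω) :
    (lam + Complex.I * ν) / lam ∈ Complex.slitPlane := by
  rw [Complex.mem_slitPlane_iff]
  have hns : 0 < Complex.normSq lam := Complex.normSq_pos.mpr hlam
  have hre : ((lam + Complex.I * ν) / lam).re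
      = (Complex.normSq lam + ν * lam.im) / Complex.normSq lam := by
    simp [Complex.div_re, Complex.normSq_apply]
    ring
  have him : ((lam + Complex.I * ν) / lam).im = ν * lam.re / Complex.normSq lam := by
    simp [Complex.div_im]
    ring
  by_cases h0 : lam.re = 0
  · left
    have habs : ω < ‖lam‖ := lt_of_not_ge (fun h => hb ⟨h0, h⟩)
    have h1 : ‖lam‖ ≤ |lam.im| := by
      have := Complex.norm_le_abs_re_add_abs_im lam
      rw [h0] at this
      simpa using this
    have h2 : ω < |lam.im| := lt_of_lt_of_le habs h1
    rw [hre]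
    apply div_pos _ hns
    have hnsq : Complex.normSq lam = lam.re ^ 2 + lam.im ^ 2 := by
      rw [Complex.normSq_apply]; ring
    rw [hnsq, h0]
    nlinarith [neg_abs_le ν, le_abs_self ν, abs_nonneg ν, _root_.sq_abs lam.im,
      abs_mul ν lam.im, neg_abs_le (ν * lam.im), abs_nonneg lam.im]
  · by_cases hν0 : ν = 0
    · left
      rw [hre, hν0]
      simp only [zero_mul, add_zero]
      exact div_pos hns hns
    · right
      rw [him]
      exact div_ne_zero (mul_ne_zero hν0 h0) (ne_of_gt hns)

lemma aux_ne (ω : ℝ) (lam : ℂ)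
    (hb : ¬ (lam.re = 0 ∧ ‖lam‖ ≤ ω)) (ν : ℝ) (hν : |ν| ≤ ω) :
    lam + Complex.I * ν ≠ 0 := by
  intro h0
  apply hb
  have hl : lam = -(Complex.I * ν) := by linear_combination h0
  constructor
  · rw [hl]; simp
  · rw [hl]; simpa using hν

lemma hI2 : Complex.I ^ 2 = -1 := Complex.I_sq
lemma hI3 : Complex.I ^ 3 = -Complex.I := by rw [pow_succ, hI2]; ring
lemma hI4 : Complex.I ^ 4 = 1 := by
  rw [show (4 : ℕ) = 2 * 2 from rfl, pow_mul, hI2]; ring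
lemma hI5 : Complex.I ^ 5 = Complex.I := by rw [pow_succ, hI4, one_mul]

lemma inner_deriv (lam c : ℂ) (ν : ℝ) :
    HasDerivAt (fun ν : ℝ => (lam + c * ν) / lam) (c / lam) ν := by
  have h0 : HasDerivAt (fun ν : ℝ => (ν : ℂ)) 1 ν := Complex.ofRealCLM.hasDerivAt
  simpa using ((h0.const_mul c).const_add lam).div_const lam

lemma log_deriv (lam c : ℂ) (ν : ℝ)
    (hmem : (lam + c * ν) / lam ∈ Complex.slitPlane) :
    HasDerivAt (fun ν : ℝ => Complex.log ((lam + c * ν) / lam))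
      (((lam + c * ν) / lam)⁻¹ * (c / lam)) ν :=
  by have := (Complex.hasDerivAt_log hmem).comp ν (inner_deriv lam c ν); exact this

theorem stmt_9 (ω : ℝ) (hω : 0 < ω) (lam₁ lam₂ : ℂ)
    (h₁ : lam₁ ≠ 0) (h₂ : lam₂ ≠ 0) (hsum : lam₁ + lam₂ ≠ 0)
    (hb₁ : ¬ (lam₁.re = 0 ∧ ‖lam₁‖ ≤ ω))
    (hb₂ : ¬ (lam₂.re = 0 ∧ ‖lam₂‖ ≤ ω)) :
    (∫ ν : ℝ in (-ω)..ω,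
        ((Complex.I * (ν : ℂ) - lam₁) * (-(Complex.I * (ν : ℂ)) - lam₂))⁻¹)
      = (2 / (lam₁ + lam₂)) * (catan ((ω : ℂ) / lam₁) + catan ((ω : ℂ) / lam₂)) := by
  have huIcc : ∀ ν ∈ Set.uIcc (-ω) ω, |ν| ≤ ω := by
    intro ν hν
    rw [Set.uIcc_of_le (by linarith)] at hν
    exact abs_le.mpr ⟨hν.1, hν.2⟩
  set f : ℝ → ℂ := fun ν =>
    ((Complex.I * (ν : ℂ) - lam₁) * (-(Complex.I * (ν : ℂ)) - lam₂))⁻¹ with hf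
  set H : ℝ → ℂ := fun ν => (lam₁ + lam₂)⁻¹ *
    (Complex.I * Complex.log ((lam₁ + -Complex.I * ν) / lam₁)
      - Complex.I * Complex.log ((lam₂ + Complex.I * ν) / lam₂)) with hH
  have key : ∀ ν ∈ Set.uIcc (-ω) ω, HasDerivAt H (f ν) ν := by
    intro ν hν
    have hνa : |ν| ≤ ω := huIcc ν hν
    have hνa' : |(-ν)| ≤ ω := by rwa [abs_neg]
    have hmem1 : (lam₁ + -Complex.I * ν) / lam₁ ∈ Complex.slitPlane := by
      have := aux_mem ω lam₁ h₁ hb₁ (-ν) hνa'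
      have e : (Complex.I * ((-ν : ℝ) : ℂ)) = -Complex.I * (ν : ℂ) := by push_cast; ring
      rwa [e] at this
    have hmem2 : (lam₂ + Complex.I * ν) / lam₂ ∈ Complex.slitPlane :=
      aux_mem ω lam₂ h₂ hb₂ ν hνa
    have hn1 : lam₁ + -Complex.I * ν ≠ 0 := by
      have := aux_ne ω lam₁ hb₁ (-ν) hνa'
      have e : (Complex.I * ((-ν : ℝ) : ℂ)) = -Complex.I * (ν : ℂ) := by push_cast; ring
      rwa [e] at this
    have hn2 : lam₂ + Complex.I * ν ≠ 0 := aux_ne ω lam₂ hb₂ ν hνa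
    have hz1 : Complex.I * (ν : ℂ) - lam₁ ≠ 0 := by
      intro h; apply hn1; linear_combination -h
    have hz2 : -(Complex.I * (ν : ℂ)) - lam₂ ≠ 0 := by
      intro h; apply hn2; linear_combination -h
    have hn1' : lam₁ - Complex.I * ν ≠ 0 := by
      intro h; apply hn1; linear_combination h
    have d1 := log_deriv lam₁ (-Complex.I) ν hmem1
    have d2 := log_deriv lam₂ Complex.I ν hmem2
    have d1' : HasDerivAt (fun ν : ℝ => Complex.I * Complex.log ((lam₁ + -Complex.I * ν) / lam₁))
        ((lam₁ + -Complex.I * ν)⁻¹) ν := by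
      have h := d1.const_mul Complex.I
      refine h.congr_deriv ?_
      have e : Complex.I * (((lam₁ + -Complex.I * (ν:ℂ)) / lam₁)⁻¹ * (-Complex.I / lam₁))
          = -(Complex.I * Complex.I) * ((lam₁ + -Complex.I * (ν:ℂ))⁻¹ * (lam₁ * lam₁⁻¹)) := by
        rw [inv_div]; ring
      rw [e, Complex.I_mul_I, mul_inv_cancel₀ h₁]; ring
    have d2' : HasDerivAt (fun ν : ℝ => Complex.I * Complex.log ((lam₂ + Complex.I * ν) / lam₂))
        (-(lam₂ + Complex.I * ν)⁻¹) ν := by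
      have h := d2.const_mul Complex.I
      refine h.congr_deriv ?_
      have e : Complex.I * (((lam₂ + Complex.I * (ν:ℂ)) / lam₂)⁻¹ * (Complex.I / lam₂))
          = Complex.I * Complex.I * ((lam₂ + Complex.I * (ν:ℂ))⁻¹ * (lam₂ * lam₂⁻¹)) := by
        rw [inv_div]; ring
      rw [e, Complex.I_mul_I, mul_inv_cancel₀ h₂]; ring
    have D := (d1'.sub d2').const_mul (lam₁ + lam₂)⁻¹
    have hD : ((Complex.I * (ν:ℂ) - lam₁) * (-(Complex.I * (ν:ℂ)) - lam₂))⁻¹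
        = (lam₁ + lam₂)⁻¹ *
          ((lam₁ + -Complex.I * (ν:ℂ))⁻¹ - -(lam₂ + Complex.I * (ν:ℂ))⁻¹) := by
      rw [sub_neg_eq_add, inv_add_inv hn1 hn2]
      rw [show lam₁ + -Complex.I * (ν:ℂ) + (lam₂ + Complex.I * (ν:ℂ)) = lam₁ + lam₂ from by ring]
      rw [show (Complex.I * (ν:ℂ) - lam₁) * (-(Complex.I * (ν:ℂ)) - lam₂)
          = (lam₁ + -Complex.I * (ν:ℂ)) * (lam₂ + Complex.I * (ν:ℂ)) from by ring]
      rw [div_eq_mul_inv, ← mul_assoc, inv_mul_cancel₀ hsum, one_mul]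
    show HasDerivAt H
      (((Complex.I * (ν:ℂ) - lam₁) * (-(Complex.I * (ν:ℂ)) - lam₂))⁻¹) ν
    exact hD ▸ D
  have hint : IntervalIntegrable f volume (-ω) ω := by
    apply ContinuousOn.intervalIntegrable
    apply ContinuousOn.inv₀
    · fun_prop
    · intro ν hν
      have hνa : |ν| ≤ ω := huIcc ν hν
      have hνa' : |(-ν)| ≤ ω := by rwa [abs_neg]
      have hn1 : lam₁ + -Complex.I * ν ≠ 0 := by
        have := aux_ne ω lam₁ hb₁ (-ν) hνa'
        have e : (Complex.I * ((-ν : ℝ) : ℂ)) = -Complex.I * (ν : ℂ) := by push_cast; ring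
        rwa [e] at this
      have hn2 : lam₂ + Complex.I * ν ≠ 0 := aux_ne ω lam₂ hb₂ ν hνa
      apply mul_ne_zero
      · intro h; apply hn1; linear_combination -h
      · intro h; apply hn2; linear_combination -h
  rw [intervalIntegral.integral_eq_sub_of_hasDerivAt key hint]
  rw [hH]
  simp only [catan]
  have e1 : (1 : ℂ) + Complex.I * ((ω : ℂ) / lam₁) = (lam₁ + Complex.I * ω) / lam₁ := by
    field_simp
  have e2 : (1 : ℂ) - Complex.I * ((ω : ℂ) / lam₁) = (lam₁ + -Complex.I * ω) / lam₁ := by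
    field_simp; ring
  have e3 : (1 : ℂ) + Complex.I * ((ω : ℂ) / lam₂) = (lam₂ + Complex.I * ω) / lam₂ := by
    field_simp
  have e4 : (1 : ℂ) - Complex.I * ((ω : ℂ) / lam₂) = (lam₂ + -Complex.I * ω) / lam₂ := by
    field_simp; ring
  rw [e1, e2, e3, e4]
  have c1 : ((-ω : ℝ) : ℂ) = -(ω : ℂ) := by push_cast; ring
  rw [c1]
  have c2 : (lam₁ + -Complex.I * -(ω:ℂ)) = lam₁ + Complex.I * ω := by ring
  have c3 : (lam₂ + Complex.I * -(ω:ℂ)) = lam₂ + -Complex.I * ω := by ring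
  rw [c2, c3]
  generalize Complex.log ((lam₁ + Complex.I * ω) / lam₁) = A₁
  generalize Complex.log ((lam₁ + -Complex.I * ω) / lam₁) = B₁
  generalize Complex.log ((lam₂ + Complex.I * ω) / lam₂) = A₂
  generalize Complex.log ((lam₂ + -Complex.I * ω) / lam₂) = B₂
  have hinv : ((2 : ℂ) * Complex.I)⁻¹ = -Complex.I / 2 := by
    rw [mul_inv, Complex.inv_I]; ring
  rw [hinv]
  field_simp
  ring
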